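/- Let γ₁ > 0 > γ₂ be the roots of cs² + s(cμ-λ-q) - qμ = 0 with c,λ,μ,q > 0 and cμ - (q+λ) > 0. Then the function C''(x), where C(x) = cW_q(x) - Z_q(x) and W_q is the exponential-claims scale function, has a unique positive root at b̄ = (1/(γ₁-γ₂))·log(γ₂²/γ₁²). -/

import Mathlib

lemma hexp_aux (a x : ℝ) : HasDerivAt (fun t => Real.exp (a * t)) (a * Real.exp (a * x)) x := by
  have h := ((hasDerivAt_id x).const_mul a).exp
  simpa [id, mul_comm] using h

theorem stmt18 (c lam mu q γ₁ γ₂ : ℝ) (hc : 0 < c) (hlam : 0 < lam) (hmu : 0 < mu) (hq : 0 < q)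
    (hprof : 0 < c * mu - (q + lam))
    (hγ₂ : γ₂ < 0) (hγ₁ : 0 < γ₁)
    (hroot1 : c * γ₁ ^ 2 + γ₁ * (c * mu - lam - q) - q * mu = 0)
    (hroot2 : c * γ₂ ^ 2 + γ₂ * (c * mu - lam - q) - q * mu = 0)
    (W Z C : ℝ → ℝ)
    (hW : W = fun x => ((mu + γ₁) * Real.exp (γ₁ * x) - (mu + γ₂) * Real.exp (γ₂ * x)) / (c * (γ₁ - γ₂)))
    (hZ : ∀ x, Z x = 1 + q * ∫ y in (0:ℝ)..x, W y)
    (hC : ∀ x, C x = c * W x - Z x)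
    (bbar : ℝ) (hbbar : bbar = (1 / (γ₁ - γ₂)) * Real.log (γ₂ ^ 2 / γ₁ ^ 2)) :
    0 < bbar ∧ deriv (deriv C) bbar = 0 ∧
      ∀ x > (0:ℝ), deriv (deriv C) x = 0 → x = bbar := by
  have hγd : 0 < γ₁ - γ₂ := by linarith
  have hD : c * (γ₁ - γ₂) ≠ 0 := by positivity
  have hDpos : 0 < c * (γ₁ - γ₂) := by positivity
  -- Vieta: sum of roots
  have hkey : (γ₁ - γ₂) * (c * (γ₁ + γ₂) + (c * mu - lam - q)) = 0 := by
    linear_combination hroot1 - hroot2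
  have hsum : c * (γ₁ + γ₂) + (c * mu - lam - q) = 0 := by
    rcases mul_eq_zero.mp hkey with h | h
    · exact absurd h (ne_of_gt hγd)
    · exact h
  have hsq : γ₁ ^ 2 < γ₂ ^ 2 := by nlinarith
  have hγ₁sq : (0:ℝ) < γ₁ ^ 2 := by positivity
  have hratio : 1 < γ₂ ^ 2 / γ₁ ^ 2 := (one_lt_div hγ₁sq).mpr hsq
  have hbpos : 0 < bbar := by
    rw [hbbar]
    exact mul_pos (by positivity) (Real.log_pos hratio)
  have hbkey : (γ₁ - γ₂) * bbar = Real.log (γ₂ ^ 2 / γ₁ ^ 2) := by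
    rw [hbbar]; field_simp
  -- continuity of W
  have hWc : Continuous W := by rw [hW]; fun_prop
  -- first derivative of W
  have hW' : ∀ x, HasDerivAt W
      (((mu + γ₁) * (γ₁ * Real.exp (γ₁ * x)) - (mu + γ₂) * (γ₂ * Real.exp (γ₂ * x))) / (c * (γ₁ - γ₂))) x := by
    intro x
    rw [hW]
    exact (((hexp_aux γ₁ x).const_mul (mu + γ₁)).sub ((hexp_aux γ₂ x).const_mul (mu + γ₂))).div_const _
  -- C as explicit function
  have hCfun : C = fun x => c * W x - (1 + q * ∫ y in (0:ℝ)..x, W y) := by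
    funext x; rw [hC, hZ]
  have hC' : ∀ x, HasDerivAt C
      (c * (((mu + γ₁) * (γ₁ * Real.exp (γ₁ * x)) - (mu + γ₂) * (γ₂ * Real.exp (γ₂ * x))) / (c * (γ₁ - γ₂)))
        - q * W x) x := by
    intro x
    rw [hCfun]
    exact ((hW' x).const_mul c).sub ((((hWc.integral_hasStrictDerivAt 0 x).hasDerivAt).const_mul q).const_add 1)
  have hderivC : deriv C = fun x =>
      c * (((mu + γ₁) * (γ₁ * Real.exp (γ₁ * x)) - (mu + γ₂) * (γ₂ * Real.exp (γ₂ * x))) / (c * (γ₁ - γ₂)))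
        - q * W x := funext fun x => (hC' x).deriv
  have hC'' : ∀ x, deriv (deriv C) x =
      lam * (γ₁ ^ 2 * Real.exp (γ₁ * x) - γ₂ ^ 2 * Real.exp (γ₂ * x)) / (c * (γ₁ - γ₂)) := by
    intro x
    have h1 : HasDerivAt (deriv C)
        (c * (((mu + γ₁) * (γ₁ * (γ₁ * Real.exp (γ₁ * x))) - (mu + γ₂) * (γ₂ * (γ₂ * Real.exp (γ₂ * x)))) / (c * (γ₁ - γ₂)))
          - q * (((mu + γ₁) * (γ₁ * Real.exp (γ₁ * x)) - (mu + γ₂) * (γ₂ * Real.exp (γ₂ * x))) / (c * (γ₁ - γ₂)))) x := by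
      rw [hderivC]
      exact (((((hexp_aux γ₁ x).const_mul γ₁).const_mul (mu + γ₁)).sub
        (((hexp_aux γ₂ x).const_mul γ₂).const_mul (mu + γ₂))).div_const _ |>.const_mul c).sub
        ((hW' x).const_mul q)
    rw [h1.deriv]
    field_simp
    linear_combination (norm := ring_nf) (Real.exp (γ₁ * x) * γ₁) * hroot1 - (Real.exp (γ₂ * x) * γ₂) * hroot2
  -- the zero condition
  have hzero : ∀ x : ℝ, deriv (deriv C) x = 0 ↔
      γ₁ ^ 2 * Real.exp (γ₁ * x) = γ₂ ^ 2 * Real.exp (γ₂ * x) := by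
    intro x
    rw [hC'', div_eq_zero_iff]
    constructor
    · rintro (h | h)
      · rcases mul_eq_zero.mp h with h | h
        · exact absurd h (ne_of_gt hlam)
        · linarith [sub_eq_zero.mp h]
      · exact absurd h hD
    · intro h
      left
      rw [show γ₁ ^ 2 * Real.exp (γ₁ * x) - γ₂ ^ 2 * Real.exp (γ₂ * x) = 0 by linarith, mul_zero]
  have hexpb : Real.exp ((γ₁ - γ₂) * bbar) = γ₂ ^ 2 / γ₁ ^ 2 := by
    rw [hbkey, Real.exp_log (by positivity)]
  refine ⟨hbpos, ?_, ?_⟩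
  · rw [hzero]
    have : Real.exp (γ₁ * bbar) = Real.exp (γ₂ * bbar) * (γ₂ ^ 2 / γ₁ ^ 2) := by
      rw [← hexpb, ← Real.exp_add]; ring_nf
    rw [this]
    field_simp
  · intro x hx hzx
    rw [hzero] at hzx
    have hexpx : Real.exp ((γ₁ - γ₂) * x) = γ₂ ^ 2 / γ₁ ^ 2 := by
      have h2 : Real.exp (γ₂ * x) ≠ 0 := Real.exp_ne_zero _
      rw [sub_mul, Real.exp_sub]
      rw [div_eq_div_iff h2 (ne_of_gt hγ₁sq)]
      linarith [hzx]
    have := congrArg Real.log hexpx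
    rw [Real.log_exp] at this
    have hx' : (γ₁ - γ₂) * x = (γ₁ - γ₂) * bbar := by rw [this, hbkey]
    exact mul_left_cancel₀ (ne_of_gt hγd) hx'
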